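/- Let λ : [0,∞) → ℝ be continuous with λ(t) ∈ [λ_min, λ_max] for all t, where 0 < λ_min ≤ λ_max. If ω solves the Riccati equation ω' = ω² − λ on [0,∞) and remains positive and finite at all times, then ω(t) ∈ [√λ_min, √λ_max] for all t > 0. -/

import Mathlib

open Set Filter Topology

/-- If the derivative at `s` is positive, then `f t > f s` for `t` slightly to the right. -/
lemma right_slope_pos {f : ℝ → ℝ} {d s : ℝ} (hf : HasDerivAt f d s) (hd : 0 < d) :
    ∀ᶠ t in 𝓝[>] s, f s < f t := by
  have h := hasDerivAt_iff_tendsto_slope.1 hf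
  have h2 : ∀ᶠ t in 𝓝[≠] s, 0 < slope f s t := h.eventually (eventually_gt_nhds hd)
  have h3 : 𝓝[>] s ≤ 𝓝[≠] s := nhdsWithin_mono _ (fun x hx => ne_of_gt hx)
  filter_upwards [h3 h2, self_mem_nhdsWithin] with t ht hts
  have hts' : (0:ℝ) < t - s := sub_pos.2 hts
  have : 0 < (f t - f s) / (t - s) := by rwa [slope_def_field] at ht
  have h6 := mul_pos this hts'
  rw [div_mul_cancel₀ _ hts'.ne'] at h6
  linarith

/-- Forward invariance: if `f a ≥ M` and the derivative is positive on the level set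
`{f = M}`, then `f t ≥ M` for all `t ≥ a`. -/
lemma stay_above (f f' : ℝ → ℝ) (a M : ℝ)
    (hf : ∀ t ∈ Set.Ici a, HasDerivAt f (f' t) t)
    (ha : M ≤ f a)
    (hd : ∀ t ∈ Set.Ici a, f t = M → 0 < f' t) :
    ∀ t ∈ Set.Ici a, M ≤ f t := by
  intro t₂ ht₂
  by_contra hlt
  push_neg at hlt
  have hat₂ : a < t₂ := by
    rcases lt_or_eq_of_le (Set.mem_Ici.1 ht₂) with h | h
    · exact h
    · exact absurd ha (by rw [h]; exact not_le.2 hlt)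
  have hcont : ContinuousOn f (Set.Icc a t₂) := fun x hx =>
    ((hf x (Set.mem_Ici.2 hx.1)).continuousAt).continuousWithinAt
  set K : Set ℝ := Set.Icc a t₂ ∩ f ⁻¹' Set.Ici M with hK
  have hKclosed : IsClosed K := hcont.preimage_isClosed_of_isClosed isClosed_Icc isClosed_Ici
  have hKne : K.Nonempty := ⟨a, ⟨le_refl a, le_of_lt hat₂⟩, ha⟩
  have hKbdd : BddAbove K := ⟨t₂, fun x hx => hx.1.2⟩
  set s := sSup K with hs
  have hsK : s ∈ K := hKclosed.csSup_mem hKne hKbdd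
  have hsa : a ≤ s := hsK.1.1
  have hst₂ : s ≤ t₂ := hsK.1.2
  have hfs : M ≤ f s := hsK.2
  have hst₂' : s < t₂ := by
    rcases lt_or_eq_of_le hst₂ with h | h
    · exact h
    · exact absurd (h ▸ hfs) (not_le.2 hlt)
  have hnotK : ∀ t ∈ Set.Ioc s t₂, f t < M := by
    intro t ht
    by_contra hge
    push_neg at hge
    have : t ∈ K := ⟨⟨le_trans hsa (le_of_lt ht.1), ht.2⟩, hge⟩
    exact absurd (le_csSup hKbdd this) (not_le.2 ht.1)
  -- In either case, eventually to the right of s we have M < f t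
  have hev : ∀ᶠ t in 𝓝[>] s, M < f t := by
    rcases lt_or_eq_of_le hfs with h | h
    · have : ContinuousAt f s := (hf s (Set.mem_Ici.2 hsa)).continuousAt
      have := this.eventually (eventually_gt_nhds h)
      exact nhdsWithin_le_nhds this
    · have hd' : 0 < f' s := hd s (Set.mem_Ici.2 hsa) h.symm
      have := right_slope_pos (hf s (Set.mem_Ici.2 hsa)) hd'
      filter_upwards [this] with t ht
      calc M = f s := h
        _ < f t := ht
  have hmem : Set.Ioc s t₂ ∈ 𝓝[>] s := Ioc_mem_nhdsGT_of_mem ⟨le_refl s, hst₂'⟩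
  obtain ⟨t, ht1, ht2⟩ := (hev.and (eventually_mem_set.2 hmem)).exists
  exact absurd ht1 (not_lt.2 (le_of_lt (hnotK t ht2)))

/-- Linear decrease: if `f' ≤ -δ` on `[a, ∞)` then `f t ≤ f a - δ (t - a)`. -/
lemma linear_bound (f f' : ℝ → ℝ) (a δ : ℝ)
    (hf : ∀ t ∈ Set.Ici a, HasDerivAt f (f' t) t)
    (hd : ∀ t ∈ Set.Ici a, f' t ≤ -δ) :
    ∀ t ∈ Set.Ici a, f t ≤ f a - δ * (t - a) := by
  have hg : ∀ t ∈ Set.Ici a, HasDerivAt (fun t => f t + δ * t) (f' t + δ) t := by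
    intro t ht
    have hlin : HasDerivAt (fun y : ℝ => δ * y) δ t := by
      simpa using (hasDerivAt_id t).const_mul δ
    exact (hf t ht).add hlin
  have hanti : AntitoneOn (fun t => f t + δ * t) (Set.Ici a) := by
    apply antitoneOn_of_deriv_nonpos (convex_Ici a)
    · exact fun x hx => ((hg x hx).continuousAt).continuousWithinAt
    · intro x hx
      rw [interior_Ici] at hx
      exact (hg x (Set.Ioi_subset_Ici_self hx)).differentiableAt.differentiableWithinAt
    · intro x hx
      rw [interior_Ici] at hx
      rw [(hg x (Set.Ioi_subset_Ici_self hx)).deriv]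
      have := hd x (Set.Ioi_subset_Ici_self hx)
      linarith
  intro t ht
  have := hanti (Set.mem_Ici.2 (le_refl a)) ht ht
  simp only at this
  linarith

/-- If `lam` is continuous with values in `[lmin, lmax]` (with `0 < lmin ≤ lmax`)
and `ω` solves the Riccati equation `ω' = ω² − λ` on `[0,∞)` while remaining positive
(hence finite), then `ω(t) ∈ [√lmin, √lmax]` for all `t > 0`. -/
theorem riccati_omega_bounds (lam ω : ℝ → ℝ) (lmin lmax : ℝ)
    (hmin : 0 < lmin) (hminmax : lmin ≤ lmax)
    (hlam_cont : ContinuousOn lam (Set.Ici 0))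
    (hlam_mem : ∀ t ∈ Set.Ici (0 : ℝ), lam t ∈ Set.Icc lmin lmax)
    (hode : ∀ t ∈ Set.Ici (0 : ℝ), HasDerivAt ω (ω t ^ 2 - lam t) t)
    (hpos : ∀ t ∈ Set.Ici (0 : ℝ), 0 < ω t) :
    ∀ t > (0 : ℝ), ω t ∈ Set.Icc (Real.sqrt lmin) (Real.sqrt lmax) := by
  intro t₀ ht₀
  have ht₀0 : (0:ℝ) ≤ t₀ := le_of_lt ht₀
  have hmax0 : (0:ℝ) < lmax := lt_of_lt_of_le hmin hminmax
  constructor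
  · -- lower bound: ω t₀ ≥ √lmin
    by_contra hlt
    push_neg at hlt
    set m := ω t₀ with hm
    have hm0 : 0 < m := hpos t₀ ht₀0
    have hm2 : m ^ 2 < lmin := (Real.lt_sqrt hm0.le).1 hlt
    set δ := lmin - m ^ 2 with hδ
    have hδ0 : 0 < δ := by linarith
    -- invariance: ω t ≤ m for t ≥ t₀
    have hIci : ∀ t ∈ Set.Ici t₀, t ∈ Set.Ici (0:ℝ) := fun t ht => le_trans ht₀0 ht
    have hinv : ∀ t ∈ Set.Ici t₀, ω t ≤ m := by
      have := stay_above (fun t => -ω t) (fun t => -(ω t ^ 2 - lam t)) t₀ (-m)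
        (fun t ht => (hode t (hIci t ht)).neg) (by simp [hm])
        (fun t ht heq => by
          have hωt : ω t = m := neg_injective heq
          have hl := (hlam_mem t (hIci t ht)).1
          rw [hωt]
          linarith)
      intro t ht
      have := this t ht
      linarith
    -- derivative ≤ -δ
    have hder : ∀ t ∈ Set.Ici t₀, ω t ^ 2 - lam t ≤ -δ := by
      intro t ht
      have h1 := hinv t ht
      have h2 := (hpos t (hIci t ht)).le
      have h3 := (hlam_mem t (hIci t ht)).1
      nlinarith
    have hlin := linear_bound ω (fun t => ω t ^ 2 - lam t) t₀ δ
      (fun t ht => hode t (hIci t ht)) hder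
    set T := t₀ + (m + 1) / δ with hT
    have hTmem : T ∈ Set.Ici t₀ := by
      have : 0 < (m + 1) / δ := div_pos (by linarith) hδ0
      simp [hT]; linarith
    have h1 := hlin T hTmem
    have hδne : δ ≠ 0 := hδ0.ne'
    have h2 : δ * (T - t₀) = m + 1 := by
      rw [hT]; field_simp; ring
    have := hpos T (hIci T hTmem)
    rw [h2] at h1
    linarith
  · -- upper bound: ω t₀ ≤ √lmax
    by_contra hlt
    push_neg at hlt
    set M := ω t₀ with hM
    have hM0 : 0 < M := hpos t₀ ht₀0
    have hM2 : lmax < M ^ 2 := (Real.sqrt_lt' hM0).1 hlt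
    obtain ⟨ε, hε⟩ : ∃ ε : ℝ, ε = 1 - lmax / M ^ 2 := ⟨_, rfl⟩
    have hM2pos : (0:ℝ) < M ^ 2 := by positivity
    have hε0 : 0 < ε := by
      have : lmax / M ^ 2 < 1 := (div_lt_one hM2pos).2 hM2
      rw [hε]
      linarith
    have hIci : ∀ t ∈ Set.Ici t₀, t ∈ Set.Ici (0:ℝ) := fun t ht => le_trans ht₀0 ht
    -- invariance: ω t ≥ M for t ≥ t₀
    have hinv : ∀ t ∈ Set.Ici t₀, M ≤ ω t := by
      apply stay_above ω (fun t => ω t ^ 2 - lam t) t₀ M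
        (fun t ht => hode t (hIci t ht)) (le_refl M)
      intro t ht heq
      have := (hlam_mem t (hIci t ht)).2
      rw [heq]
      linarith
    -- work with u = 1/ω
    set u : ℝ → ℝ := fun t => (ω t)⁻¹ with hu
    have hune : ∀ t ∈ Set.Ici t₀, ω t ≠ 0 := fun t ht => (hpos t (hIci t ht)).ne'
    have hud : ∀ t ∈ Set.Ici t₀,
        HasDerivAt u (-(ω t ^ 2 - lam t) / ω t ^ 2) t :=
      fun t ht => (hode t (hIci t ht)).inv (hune t ht)
    have hder : ∀ t ∈ Set.Ici t₀, -(ω t ^ 2 - lam t) / ω t ^ 2 ≤ -ε := by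
      intro t ht
      have h1 := hinv t ht
      have h2 := hpos t (hIci t ht)
      have h3 := (hlam_mem t (hIci t ht)).2
      have h4 : lam t / ω t ^ 2 ≤ lmax / M ^ 2 := by
        apply div_le_div₀ hmax0.le h3 hM2pos
        nlinarith
      have hA : ω t ^ 2 ≠ 0 := by positivity
      have h5 : -(ω t ^ 2 - lam t) / ω t ^ 2 = lam t / ω t ^ 2 - 1 := by
        field_simp
        ring
      rw [h5, hε]
      linarith
    have hlin := linear_bound u (fun t => -(ω t ^ 2 - lam t) / ω t ^ 2) t₀ ε hud hder
    have hut₀ : 0 < u t₀ := by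
      simp only [hu]
      exact inv_pos.2 hM0
    set T := t₀ + (u t₀ + 1) / ε with hT
    have hTmem : T ∈ Set.Ici t₀ := by
      have : 0 < (u t₀ + 1) / ε := div_pos (by linarith) hε0
      simp only [hT, Set.mem_Ici]
      linarith
    have h1 := hlin T hTmem
    have h2 : ε * (T - t₀) = u t₀ + 1 := by
      rw [hT]
      field_simp
      ring
    have h3 : 0 < u T := inv_pos.2 (hpos T (hIci T hTmem))
    rw [h2] at h1
    linarith
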